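/- arXiv:0908.1440 — 5 statements merged into one kernel-verified Lean document; each statement's English description precedes it below -/
import Mathlib

section
/- Let p, q : [0,∞) → ℝ be continuous, let ξ₁, ξ ∈ ℝ, and let K ≥ 1. Let u_p, y_p : [0,∞) → ℝ be twice continuously differentiable with −u_p'' + p·u_p = ξ₁·u_p, −y_p'' + p·y_p = ξ₁·y_p, u_p(0) = 1, u_p'(0) = 0, y_p(0) = 0, y_p'(0) = 1, and suppose |u_p(x)| ≤ K and |y_p(x)| ≤ K for all x ≥ 0. Let u : [0,∞) → ℝ be twice continuously differentiable with −u'' + (p+q)·u = ξ·u, u(0) = 1, u'(0) = 0. Then for every x ≥ 0, |u(x)| ≤ 2K · exp( 2K² ∫₀ˣ ( |ξ − ξ₁| + |q(t)| ) dt ). -/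
open MeasureTheory intervalIntegral Set

/-- Auxiliary Gronwall-type lemma: if `c' ≤ g·c` on `(0,x0)` with `g` continuous nonnegative
and `c 0 ≤ 1`, then `c x0 ≤ exp(∫₀^{x0} g)`. -/
lemma gronwall_aux (c c' g : ℝ → ℝ) (x0 : ℝ) (hx0 : 0 ≤ x0)
    (hg_cont : ContinuousOn g (Ici 0)) (_hg_nonneg : ∀ t, 0 ≤ g t)
    (hc_cont : ContinuousOn c (Icc 0 x0))
    (hc' : ∀ y ∈ Ioo (0:ℝ) x0, HasDerivAt c (c' y) y)
    (hbound : ∀ y ∈ Ioo (0:ℝ) x0, c' y ≤ g y * c y)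
    (hc0 : c 0 ≤ 1) :
    c x0 ≤ Real.exp (∫ t in (0:ℝ)..x0, g t) := by
  have hgint : IntegrableOn g (Icc 0 x0) :=
    (hg_cont.mono Icc_subset_Ici_self).integrableOn_Icc
  have hHcont : ContinuousOn (fun y => ∫ t in (0:ℝ)..y, g t) (Icc 0 x0) := by
    have := intervalIntegral.continuousOn_primitive_interval (μ := volume) (f := g)
      (a := 0) (b := x0) (by rwa [uIcc_of_le hx0])
    rwa [uIcc_of_le hx0] at this
  have hH' : ∀ y ∈ Ioo (0:ℝ) x0, HasDerivAt (fun z => ∫ t in (0:ℝ)..z, g t) (g y) y := by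
    intro y hy
    apply intervalIntegral.integral_hasDerivAt_right
    · exact (hg_cont.mono (by rw [uIcc_of_le hy.1.le]; exact Icc_subset_Ici_self)).intervalIntegrable
    · exact ContinuousOn.stronglyMeasurableAtFilter isOpen_Ioi
        (hg_cont.mono Ioi_subset_Ici_self) _ hy.1
    · exact hg_cont.continuousAt (Ici_mem_nhds hy.1)
  set G : ℝ → ℝ := fun y => c y * Real.exp (-(∫ t in (0:ℝ)..y, g t)) with hG_def
  have hG' : ∀ y ∈ Ioo (0:ℝ) x0, HasDerivAt G
      (c' y * Real.exp (-(∫ t in (0:ℝ)..y, g t)) +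
        c y * (Real.exp (-(∫ t in (0:ℝ)..y, g t)) * (-g y))) y := by
    intro y hy
    exact (hc' y hy).mul (((hH' y hy).neg).exp)
  have hGanti : AntitoneOn G (Icc 0 x0) := by
    apply antitoneOn_of_deriv_nonpos (convex_Icc 0 x0)
    · exact hc_cont.mul (Real.continuous_exp.comp_continuousOn hHcont.neg)
    · rw [interior_Icc]
      exact fun y hy => ((hG' y hy).differentiableAt).differentiableWithinAt
    · rw [interior_Icc]
      intro y hy
      rw [(hG' y hy).deriv]
      have hE := (Real.exp_pos (-(∫ t in (0:ℝ)..y, g t))).le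
      nlinarith [mul_nonneg hE (sub_nonneg.mpr (hbound y hy))]
  have hfin : G x0 ≤ G 0 := hGanti (left_mem_Icc.mpr hx0) (right_mem_Icc.mpr hx0) hx0
  have hG0 : G 0 ≤ 1 := by
    simp only [hG_def, intervalIntegral.integral_same, neg_zero, Real.exp_zero, mul_one]
    exact hc0
  have hEpos : 0 < Real.exp (-(∫ t in (0:ℝ)..x0, g t)) := Real.exp_pos _
  have hinv : Real.exp (∫ t in (0:ℝ)..x0, g t)
      = (Real.exp (-(∫ t in (0:ℝ)..x0, g t)))⁻¹ := by
    rw [Real.exp_neg, inv_inv]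
  rw [hinv]
  have h1 : c x0 * Real.exp (-(∫ t in (0:ℝ)..x0, g t)) ≤ 1 := le_trans hfin hG0
  have h2 := mul_le_mul_of_nonneg_right h1 (inv_nonneg.mpr hEpos.le)
  rwa [mul_assoc, mul_inv_cancel₀ (ne_of_gt hEpos), mul_one, one_mul] at h2

/-- **Variation-of-parameters / Gronwall bound for perturbed periodic operators.**
If the fundamental solutions `u_p`, `y_p` of `-v'' + p v = ξ₁ v` are bounded by `K ≥ 1`
on `[0,∞)`, then the Neumann solution `u` of `-u'' + (p+q) u = ξ u` satisfies
`|u(x)| ≤ 2K·exp(2K² ∫₀ˣ (|ξ − ξ₁| + |q(t)|) dt)`. -/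
theorem perturbed_solution_gronwall_bound
    (p q : ℝ → ℝ) (hp : ContinuousOn p (Ici 0)) (hq : ContinuousOn q (Ici 0))
    (ξ₁ ξ : ℝ) (K : ℝ) (hK : 1 ≤ K)
    (up up' up'' yp yp' yp'' : ℝ → ℝ)
    (hup1 : ∀ x ∈ Ici (0:ℝ), HasDerivAt up (up' x) x)
    (hup2 : ∀ x ∈ Ici (0:ℝ), HasDerivAt up' (up'' x) x)
    (hup3 : ContinuousOn up'' (Ici 0))
    (hyp1 : ∀ x ∈ Ici (0:ℝ), HasDerivAt yp (yp' x) x)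
    (hyp2 : ∀ x ∈ Ici (0:ℝ), HasDerivAt yp' (yp'' x) x)
    (hyp3 : ContinuousOn yp'' (Ici 0))
    (hODEup : ∀ x ∈ Ici (0:ℝ), -up'' x + p x * up x = ξ₁ * up x)
    (hODEyp : ∀ x ∈ Ici (0:ℝ), -yp'' x + p x * yp x = ξ₁ * yp x)
    (hbcup1 : up 0 = 1) (hbcup2 : up' 0 = 0)
    (hbcyp1 : yp 0 = 0) (hbcyp2 : yp' 0 = 1)
    (hupK : ∀ x ≥ (0:ℝ), |up x| ≤ K) (hypK : ∀ x ≥ (0:ℝ), |yp x| ≤ K)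
    (u u' u'' : ℝ → ℝ)
    (hu1 : ∀ x ∈ Ici (0:ℝ), HasDerivAt u (u' x) x)
    (hu2 : ∀ x ∈ Ici (0:ℝ), HasDerivAt u' (u'' x) x)
    (hu3 : ContinuousOn u'' (Ici 0))
    (hODEu : ∀ x ∈ Ici (0:ℝ), -u'' x + (p x + q x) * u x = ξ * u x)
    (hbcu1 : u 0 = 1) (hbcu2 : u' 0 = 0) :
    ∀ x ≥ (0:ℝ),
      |u x| ≤ 2 * K *
        Real.exp (2 * K ^ 2 * ∫ t in (0:ℝ)..x, (|ξ - ξ₁| + |q t|)) := by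
  have hK0 : (0:ℝ) < K := lt_of_lt_of_le one_pos hK
  -- the perturbation size
  set h : ℝ → ℝ := fun t => |ξ - ξ₁| + |q t| with hh_def
  have hh_nonneg : ∀ t, 0 ≤ h t := fun t => add_nonneg (abs_nonneg _) (abs_nonneg _)
  have hh_cont : ContinuousOn h (Ici 0) := continuousOn_const.add hq.abs
  -- coefficients in the variation of parameters representation
  set A : ℝ → ℝ := fun y => yp' y * u y - yp y * u' y with hA_def
  set B : ℝ → ℝ := fun y => up y * u' y - up' y * u y with hB_def
  have hA' : ∀ y ∈ Ici (0:ℝ), HasDerivAt A ((ξ - ξ₁ - q y) * (yp y * u y)) y := by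
    intro y hy
    have h1 := ((hyp2 y hy).mul (hu1 y hy)).sub ((hyp1 y hy).mul (hu2 y hy))
    refine h1.congr_deriv ?_
    have e1 : yp'' y = p y * yp y - ξ₁ * yp y := by linarith [hODEyp y hy]
    have e2 : u'' y = (p y + q y) * u y - ξ * u y := by linarith [hODEu y hy]
    rw [e1, e2]; ring
  have hB' : ∀ y ∈ Ici (0:ℝ), HasDerivAt B ((q y + ξ₁ - ξ) * (up y * u y)) y := by
    intro y hy
    have h1 := ((hup1 y hy).mul (hu2 y hy)).sub ((hup2 y hy).mul (hu1 y hy))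
    refine h1.congr_deriv ?_
    have e1 : up'' y = p y * up y - ξ₁ * up y := by linarith [hODEup y hy]
    have e2 : u'' y = (p y + q y) * u y - ξ * u y := by linarith [hODEu y hy]
    rw [e1, e2]; ring
  -- Wronskian is identically one
  have hW' : ∀ y ∈ Ici (0:ℝ),
      HasDerivAt (fun z => up z * yp' z - yp z * up' z) 0 y := by
    intro y hy
    have h1 := ((hup1 y hy).mul (hyp2 y hy)).sub ((hyp1 y hy).mul (hup2 y hy))
    refine h1.congr_deriv ?_
    have e1 : yp'' y = p y * yp y - ξ₁ * yp y := by linarith [hODEyp y hy]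
    have e2 : up'' y = p y * up y - ξ₁ * up y := by linarith [hODEup y hy]
    rw [e1, e2]; ring
  have hW1 : ∀ y ∈ Ici (0:ℝ), up y * yp' y - yp y * up' y = 1 := by
    intro y hy
    have hcont : ContinuousOn (fun z => up z * yp' z - yp z * up' z) (Icc 0 y) :=
      fun z hz => (hW' z hz.1).continuousAt.continuousWithinAt
    have hconst := constant_of_has_deriv_right_zero hcont
      (fun z hz => (hW' z hz.1).hasDerivWithinAt)
    have := hconst y (right_mem_Icc.mpr hy)
    simpa [hbcup1, hbcup2, hbcyp1, hbcyp2] using this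
  -- representation of u
  have hrep : ∀ y ∈ Ici (0:ℝ), u y = A y * up y + B y * yp y := by
    intro y hy
    have w := hW1 y hy
    simp only [hA_def, hB_def]
    linear_combination (-(u y)) * w
  -- pointwise bound on u in terms of A, B
  have hu_bound : ∀ y ∈ Ici (0:ℝ), |u y| ≤ K * (|A y| + |B y|) := by
    intro y hy
    have h1 : |u y| ≤ |A y| * |up y| + |B y| * |yp y| := by
      rw [hrep y hy]
      refine (abs_add_le _ _).trans ?_
      rw [abs_mul, abs_mul]
    nlinarith [hupK y hy, hypK y hy, abs_nonneg (A y), abs_nonneg (B y)]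
  -- bounds on the derivatives
  have hA'bound : ∀ y ∈ Ici (0:ℝ),
      |(ξ - ξ₁ - q y) * (yp y * u y)| ≤ h y * (K * (K * (|A y| + |B y|))) := by
    intro y hy
    have e1 : |ξ - ξ₁ - q y| ≤ h y := by
      rw [hh_def]
      calc |ξ - ξ₁ - q y| = |(ξ - ξ₁) + (-(q y))| := by ring_nf
        _ ≤ |ξ - ξ₁| + |(-(q y))| := abs_add_le _ _
        _ = |ξ - ξ₁| + |q y| := by rw [abs_neg]
    rw [abs_mul, abs_mul]
    gcongr
    · exact hypK y hy
    · exact hu_bound y hy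
  have hB'bound : ∀ y ∈ Ici (0:ℝ),
      |(q y + ξ₁ - ξ) * (up y * u y)| ≤ h y * (K * (K * (|A y| + |B y|))) := by
    intro y hy
    have e1 : |q y + ξ₁ - ξ| ≤ h y := by
      rw [hh_def]
      calc |q y + ξ₁ - ξ| = |(-(ξ - ξ₁)) + q y| := by ring_nf
        _ ≤ |(-(ξ - ξ₁))| + |q y| := abs_add_le _ _
        _ = |ξ - ξ₁| + |q y| := by rw [abs_neg]
    rw [abs_mul, abs_mul]
    gcongr
    · exact hupK y hy
    · exact hu_bound y hy
  -- now the Gronwall argument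
  intro x0 hx0
  have hx0' : x0 ∈ Ici (0:ℝ) := hx0
  -- c = A² + B²
  have hc' : ∀ y ∈ Ioo (0:ℝ) x0, HasDerivAt (fun z => A z ^ 2 + B z ^ 2)
      (2 * A y * ((ξ - ξ₁ - q y) * (yp y * u y)) +
        2 * B y * ((q y + ξ₁ - ξ) * (up y * u y))) y := by
    intro y hy
    have hyI : y ∈ Ici (0:ℝ) := hy.1.le
    have h1 := ((hA' y hyI).pow 2).add ((hB' y hyI).pow 2)
    refine h1.congr_deriv ?_
    push_cast
    ring
  have hc_cont : ContinuousOn (fun z => A z ^ 2 + B z ^ 2) (Icc 0 x0) := by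
    have hAcont : ContinuousOn A (Icc 0 x0) :=
      fun z hz => (hA' z (Icc_subset_Ici_self hz)).continuousAt.continuousWithinAt
    have hBcont : ContinuousOn B (Icc 0 x0) :=
      fun z hz => (hB' z (Icc_subset_Ici_self hz)).continuousAt.continuousWithinAt
    exact (hAcont.pow 2).add (hBcont.pow 2)
  have hbound : ∀ y ∈ Ioo (0:ℝ) x0,
      2 * A y * ((ξ - ξ₁ - q y) * (yp y * u y)) +
        2 * B y * ((q y + ξ₁ - ξ) * (up y * u y))
      ≤ (4 * K ^ 2 * h y) * (A y ^ 2 + B y ^ 2) := by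
    intro y hy
    have hyI : y ∈ Ici (0:ℝ) := hy.1.le
    have p1 : A y * ((ξ - ξ₁ - q y) * (yp y * u y))
        ≤ |A y| * |(ξ - ξ₁ - q y) * (yp y * u y)| := by
      rw [← abs_mul]; exact le_abs_self _
    have p2 : B y * ((q y + ξ₁ - ξ) * (up y * u y))
        ≤ |B y| * |(q y + ξ₁ - ξ) * (up y * u y)| := by
      rw [← abs_mul]; exact le_abs_self _
    have r1 : |A y| * |(ξ - ξ₁ - q y) * (yp y * u y)|
        ≤ |A y| * (h y * (K * (K * (|A y| + |B y|)))) :=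
      mul_le_mul_of_nonneg_left (hA'bound y hyI) (abs_nonneg _)
    have r2 : |B y| * |(q y + ξ₁ - ξ) * (up y * u y)|
        ≤ |B y| * (h y * (K * (K * (|A y| + |B y|)))) :=
      mul_le_mul_of_nonneg_left (hB'bound y hyI) (abs_nonneg _)
    have s1 : 0 ≤ h y * (K * K * (|A y| - |B y|) ^ 2) :=
      mul_nonneg (hh_nonneg y) (by positivity)
    rw [← sq_abs (A y), ← sq_abs (B y)]
    nlinarith [p1, p2, r1, r2, s1]
  have hc0 : A 0 ^ 2 + B 0 ^ 2 ≤ 1 := by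
    simp [hA_def, hB_def, hbcu1, hbcu2, hbcyp1, hbcyp2, hbcup1, hbcup2]
  have hg_cont : ContinuousOn (fun t => 4 * K ^ 2 * h t) (Ici 0) :=
    continuousOn_const.mul hh_cont
  have hg_nonneg : ∀ t, 0 ≤ 4 * K ^ 2 * h t :=
    fun t => mul_nonneg (by positivity) (hh_nonneg t)
  have hmain := gronwall_aux (fun z => A z ^ 2 + B z ^ 2)
    (fun y => 2 * A y * ((ξ - ξ₁ - q y) * (yp y * u y)) +
        2 * B y * ((q y + ξ₁ - ξ) * (up y * u y)))
    (fun t => 4 * K ^ 2 * h t) x0 hx0 hg_cont hg_nonneg hc_cont hc' hbound hc0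
  -- rewrite the integral
  have hint_eq : (∫ t in (0:ℝ)..x0, 4 * K ^ 2 * h t)
      = 4 * K ^ 2 * ∫ t in (0:ℝ)..x0, h t :=
    intervalIntegral.integral_const_mul _ _
  rw [hint_eq] at hmain
  set I : ℝ := ∫ t in (0:ℝ)..x0, h t with hI_def
  set R : ℝ := Real.exp (2 * K ^ 2 * I) with hR_def
  have hRpos : 0 < R := Real.exp_pos _
  have hRsq : R ^ 2 = Real.exp (4 * K ^ 2 * I) := by
    rw [hR_def, sq, ← Real.exp_add]
    ring_nf
  have hc_le : A x0 ^ 2 + B x0 ^ 2 ≤ R ^ 2 := by rw [hRsq]; exact hmain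
  have ht0 : 0 ≤ |A x0| + |B x0| := by positivity
  have hsq : (|A x0| + |B x0|) ^ 2 ≤ (2 * R) ^ 2 := by
    nlinarith [hc_le, sq_abs (A x0), sq_abs (B x0), sq_nonneg (|A x0| - |B x0|), hRpos]
  have hab : |A x0| + |B x0| ≤ 2 * R := by
    have h2R : (0:ℝ) ≤ 2 * R := by linarith
    have := Real.sqrt_le_sqrt hsq
    rwa [Real.sqrt_sq ht0, Real.sqrt_sq h2R] at this
  have hfinal : |u x0| ≤ K * (2 * R) :=
    le_trans (hu_bound x0 hx0') (mul_le_mul_of_nonneg_left hab hK0.le)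
  calc |u x0| ≤ K * (2 * R) := hfinal
    _ = 2 * K * R := by ring
end

section
/- Let μ, μ* be positive Borel measures on ℝ with μ ≤ μ* (i.e., μ(E) ≤ μ*(E) for every Borel set E). Let K, K* : ℝ × ℝ → ℝ be symmetric kernels whose sections K(ξ,·), K*(ξ,·) are square-integrable with respect to both μ and μ*, satisfying for all ξ, β ∈ ℝ: (i) ∫ K(ξ,ζ)K(β,ζ) dμ(ζ) = K(ξ,β); (ii) ∫ K*(ξ,ζ)K*(β,ζ) dμ*(ζ) = K*(ξ,β); (iii) ∫ K*(ξ,ζ)K(β,ζ) dμ(ζ) = K*(ξ,β). Then for every ξ ∈ ℝ, ∫ ( K(ξ,ζ) − K*(ξ,ζ) )² dμ(ζ) ≤ K(ξ,ξ) − K*(ξ,ξ); in particular K*(ξ,ξ) ≤ K(ξ,ξ). -/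
open MeasureTheory Set

lemma memLp_two_integrable_mul {μ : Measure ℝ} {f g : ℝ → ℝ}
    (hf : MeasureTheory.MemLp f 2 μ) (hg : MeasureTheory.MemLp g 2 μ) :
    MeasureTheory.Integrable (fun x => f x * g x) μ := by
  have h : MeasureTheory.MemLp (f • g) 1 μ :=
    hg.smul hf
  simpa [Pi.smul_apply, smul_eq_mul, Pi.mul_def] using
    (MeasureTheory.memLp_one_iff_integrable.mp h)

/-- **First step of Lubinsky's inequality.** For reproducing kernels `K`, `K'` of
measures `μ ≤ μ*`, one has `∫ (K(ξ,·) − K'(ξ,·))² dμ ≤ K(ξ,ξ) − K'(ξ,ξ)`; in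
particular `K'(ξ,ξ) ≤ K(ξ,ξ)`. -/
theorem lubinsky_first_step
    (μ μs : Measure ℝ) (hle : μ ≤ μs)
    (K K' : ℝ → ℝ → ℝ)
    (hKsymm : ∀ ξ β : ℝ, K ξ β = K β ξ)
    (hK'symm : ∀ ξ β : ℝ, K' ξ β = K' β ξ)
    (hKL2 : ∀ ξ : ℝ, MemLp (K ξ) 2 μ ∧ MemLp (K ξ) 2 μs)
    (hK'L2 : ∀ ξ : ℝ, MemLp (K' ξ) 2 μ ∧ MemLp (K' ξ) 2 μs)
    (hrepK : ∀ ξ β : ℝ, ∫ ζ, K ξ ζ * K β ζ ∂μ = K ξ β)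
    (hrepK' : ∀ ξ β : ℝ, ∫ ζ, K' ξ ζ * K' β ζ ∂μs = K' ξ β)
    (hmixed : ∀ ξ β : ℝ, ∫ ζ, K' ξ ζ * K β ζ ∂μ = K' ξ β) :
    ∀ ξ : ℝ,
      (∫ ζ, (K ξ ζ - K' ξ ζ) ^ 2 ∂μ ≤ K ξ ξ - K' ξ ξ) ∧ K' ξ ξ ≤ K ξ ξ := by
  intro ξ
  have hKμ := (hKL2 ξ).1
  have hK'μ := (hK'L2 ξ).1
  have hK'μs := (hK'L2 ξ).2
  -- integrabilities
  have hKK : Integrable (fun ζ => K ξ ζ * K ξ ζ) μ := memLp_two_integrable_mul hKμ hKμ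
  have hK'K : Integrable (fun ζ => K' ξ ζ * K ξ ζ) μ := memLp_two_integrable_mul hK'μ hKμ
  have hK'K'μ : Integrable (fun ζ => K' ξ ζ * K' ξ ζ) μ := memLp_two_integrable_mul hK'μ hK'μ
  have hK'K'μs : Integrable (fun ζ => K' ξ ζ * K' ξ ζ) μs := memLp_two_integrable_mul hK'μs hK'μs
  -- key inequality : ∫ K'² dμ ≤ ∫ K'² dμs = K'(ξ,ξ)
  have hmono : ∫ ζ, K' ξ ζ * K' ξ ζ ∂μ ≤ ∫ ζ, K' ξ ζ * K' ξ ζ ∂μs := by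
    refine integral_mono_measure hle ?_ hK'K'μs
    filter_upwards with ζ using mul_self_nonneg _
  -- expand the square
  have hexp : ∫ ζ, (K ξ ζ - K' ξ ζ) ^ 2 ∂μ
      = K ξ ξ - 2 * K' ξ ξ + ∫ ζ, K' ξ ζ * K' ξ ζ ∂μ := by
    have : ∀ ζ, (K ξ ζ - K' ξ ζ) ^ 2
        = K ξ ζ * K ξ ζ - 2 * (K' ξ ζ * K ξ ζ) + K' ξ ζ * K' ξ ζ := by
      intro ζ; ring
    have hsub : Integrable (fun ζ => K ξ ζ * K ξ ζ - 2 * (K' ξ ζ * K ξ ζ)) μ :=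
      hKK.sub (hK'K.const_mul 2)
    rw [integral_congr_ae (Filter.Eventually.of_forall this),
      integral_add hsub hK'K'μ,
      integral_sub hKK (hK'K.const_mul 2), integral_const_mul,
      hrepK ξ ξ, hmixed ξ ξ]
  have h1 : ∫ ζ, (K ξ ζ - K' ξ ζ) ^ 2 ∂μ ≤ K ξ ξ - K' ξ ξ := by
    rw [hexp, hrepK' ξ ξ] at *
    linarith
  refine ⟨h1, ?_⟩
  have h0 : 0 ≤ ∫ ζ, (K ξ ζ - K' ξ ζ) ^ 2 ∂μ :=
    integral_nonneg fun ζ => sq_nonneg _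
  linarith
end

section
/- Let μ, μ* be positive Borel measures on ℝ with μ ≤ μ* (i.e., μ(E) ≤ μ*(E) for every Borel set E). Let K, K* : ℝ × ℝ → ℝ be symmetric kernels whose sections K(ξ,·), K*(ξ,·) are square-integrable with respect to both μ and μ*, satisfying for all ξ, β ∈ ℝ: (i) ∫ K(ξ,ζ)K(β,ζ) dμ(ζ) = K(ξ,β); (ii) ∫ K*(ξ,ζ)K*(β,ζ) dμ*(ζ) = K*(ξ,β); (iii) ∫ K*(ξ,ζ)K(β,ζ) dμ(ζ) = K*(ξ,β). Then for all ξ, β ∈ ℝ, |K(ξ,β) − K*(ξ,β)| ≤ K(β,β)^{1/2} · ( K(ξ,ξ) − K*(ξ,ξ) )^{1/2}. -/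
open MeasureTheory Set

private lemma my_integrable_mul {μ : Measure ℝ} {f g : ℝ → ℝ}
    (hf : MemLp f 2 μ) (hg : MemLp g 2 μ) :
    Integrable (fun x => f x * g x) μ := by
  have h := MeasureTheory.L2.integrable_inner (𝕜 := ℝ) (hf.toLp f) (hg.toLp g)
  refine h.congr ?_
  filter_upwards [hf.coeFn_toLp, hg.coeFn_toLp] with x hx hy
  simp [hx, hy, RCLike.inner_apply, mul_comm]

private lemma my_cs {μ : Measure ℝ} {f g : ℝ → ℝ}
    (hf : MemLp f 2 μ) (hg : MemLp g 2 μ) :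
    |∫ x, f x * g x ∂μ| ≤
      Real.sqrt (∫ x, f x ^ 2 ∂μ) * Real.sqrt (∫ x, g x ^ 2 ∂μ) := by
  set F := hf.toLp f
  set G := hg.toLp g
  have hFG : (inner ℝ F G : ℝ) = ∫ x, f x * g x ∂μ := by
    rw [MeasureTheory.L2.inner_def]
    refine integral_congr_ae ?_
    filter_upwards [hf.coeFn_toLp, hg.coeFn_toLp] with x hx hy
    simp [F, G, hx, hy, RCLike.inner_apply, mul_comm]
  have hFF : (inner ℝ F F : ℝ) = ∫ x, f x ^ 2 ∂μ := by
    rw [MeasureTheory.L2.inner_def]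
    refine integral_congr_ae ?_
    filter_upwards [hf.coeFn_toLp] with x hx
    simp [F, hx, RCLike.inner_apply, sq]
  have hGG : (inner ℝ G G : ℝ) = ∫ x, g x ^ 2 ∂μ := by
    rw [MeasureTheory.L2.inner_def]
    refine integral_congr_ae ?_
    filter_upwards [hg.coeFn_toLp] with x hx
    simp [G, hx, RCLike.inner_apply, sq]
  have h := real_inner_mul_inner_self_le F G
  rw [hFG, hFF, hGG] at h
  have h1 : 0 ≤ ∫ x, f x ^ 2 ∂μ := by positivity
  have h2 : 0 ≤ ∫ x, g x ^ 2 ∂μ := by positivity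
  calc |∫ x, f x * g x ∂μ| = Real.sqrt ((∫ x, f x * g x ∂μ) * (∫ x, f x * g x ∂μ)) := by
        rw [Real.sqrt_mul_self_eq_abs]
    _ ≤ Real.sqrt ((∫ x, f x ^ 2 ∂μ) * ∫ x, g x ^ 2 ∂μ) := Real.sqrt_le_sqrt h
    _ = _ := Real.sqrt_mul h1 _

/-- **Lubinsky's inequality for reproducing kernels.** For reproducing kernels
`K`, `K'` of measures `μ ≤ μ*`,
`|K(ξ,β) − K'(ξ,β)| ≤ K(β,β)^{1/2} (K(ξ,ξ) − K'(ξ,ξ))^{1/2}`. -/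
theorem lubinsky_inequality
    (μ μs : Measure ℝ) (hle : μ ≤ μs)
    (K K' : ℝ → ℝ → ℝ)
    (hKsymm : ∀ ξ β : ℝ, K ξ β = K β ξ)
    (hK'symm : ∀ ξ β : ℝ, K' ξ β = K' β ξ)
    (hKL2 : ∀ ξ : ℝ, MemLp (K ξ) 2 μ ∧ MemLp (K ξ) 2 μs)
    (hK'L2 : ∀ ξ : ℝ, MemLp (K' ξ) 2 μ ∧ MemLp (K' ξ) 2 μs)
    (hrepK : ∀ ξ β : ℝ, ∫ ζ, K ξ ζ * K β ζ ∂μ = K ξ β)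
    (hrepK' : ∀ ξ β : ℝ, ∫ ζ, K' ξ ζ * K' β ζ ∂μs = K' ξ β)
    (hmixed : ∀ ξ β : ℝ, ∫ ζ, K' ξ ζ * K β ζ ∂μ = K' ξ β) :
    ∀ ξ β : ℝ,
      |K ξ β - K' ξ β| ≤
        Real.sqrt (K β β) * Real.sqrt (K ξ ξ - K' ξ ξ) := by
  intro ξ β
  set D : ℝ → ℝ := fun ζ => K ξ ζ - K' ξ ζ with hD
  have hDL2 : MemLp D 2 μ := (hKL2 ξ).1.sub (hK'L2 ξ).1
  have hKβ : MemLp (K β) 2 μ := (hKL2 β).1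
  -- the cross integral equals the difference
  have hint : ∫ ζ, D ζ * K β ζ ∂μ = K ξ β - K' ξ β := by
    have h1 : Integrable (fun ζ => K ξ ζ * K β ζ) μ := my_integrable_mul (hKL2 ξ).1 hKβ
    have h2 : Integrable (fun ζ => K' ξ ζ * K β ζ) μ := my_integrable_mul (hK'L2 ξ).1 hKβ
    have : ∫ ζ, D ζ * K β ζ ∂μ
        = (∫ ζ, K ξ ζ * K β ζ ∂μ) - ∫ ζ, K' ξ ζ * K β ζ ∂μ := by
      rw [← integral_sub h1 h2]
      congr 1 with ζ
      simp [hD]; ring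
    rw [this, hrepK ξ β, hmixed ξ β]
  -- bound the square integral of D
  have hD2 : ∫ ζ, D ζ ^ 2 ∂μ ≤ K ξ ξ - K' ξ ξ := by
    have e1 : ∫ ζ, K ξ ζ ^ 2 ∂μ = K ξ ξ := by
      rw [← hrepK ξ ξ]; congr 1 with ζ; ring
    have e2 : ∫ ζ, K' ξ ζ * K ξ ζ ∂μ = K' ξ ξ := hmixed ξ ξ
    have e3 : ∫ ζ, K' ξ ζ ^ 2 ∂μ ≤ K' ξ ξ := by
      rw [← hrepK' ξ ξ]
      have : ∫ ζ, K' ξ ζ * K' ξ ζ ∂μs = ∫ ζ, K' ξ ζ ^ 2 ∂μs := by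
        congr 1 with ζ; ring
      rw [this]
      exact integral_mono_measure hle
        (Filter.Eventually.of_forall fun x => sq_nonneg _)
        (hK'L2 ξ).2.integrable_sq
    have hexp : ∫ ζ, D ζ ^ 2 ∂μ
        = (∫ ζ, K ξ ζ ^ 2 ∂μ) - 2 * (∫ ζ, K' ξ ζ * K ξ ζ ∂μ) + ∫ ζ, K' ξ ζ ^ 2 ∂μ := by
      have i1 : Integrable (fun ζ => K ξ ζ ^ 2) μ := (hKL2 ξ).1.integrable_sq
      have i2 : Integrable (fun ζ => K' ξ ζ * K ξ ζ) μ :=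
        my_integrable_mul (hK'L2 ξ).1 (hKL2 ξ).1
      have i3 : Integrable (fun ζ => K' ξ ζ ^ 2) μ := (hK'L2 ξ).1.integrable_sq
      calc ∫ ζ, D ζ ^ 2 ∂μ
          = ∫ ζ, ((K ξ ζ ^ 2 - 2 * (K' ξ ζ * K ξ ζ)) + K' ξ ζ ^ 2) ∂μ := by
            congr 1 with ζ; simp only [hD]; ring
        _ = (∫ ζ, (K ξ ζ ^ 2 - 2 * (K' ξ ζ * K ξ ζ)) ∂μ) + ∫ ζ, K' ξ ζ ^ 2 ∂μ :=
            integral_add (i1.sub (i2.const_mul 2)) i3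
        _ = (∫ ζ, K ξ ζ ^ 2 ∂μ) - 2 * (∫ ζ, K' ξ ζ * K ξ ζ ∂μ) + ∫ ζ, K' ξ ζ ^ 2 ∂μ := by
            rw [integral_sub i1 (i2.const_mul 2), integral_const_mul]
    rw [hexp, e1, e2]
    linarith
  -- Cauchy–Schwarz
  have hcs := my_cs hDL2 hKβ
  rw [hint] at hcs
  have e4 : ∫ ζ, K β ζ ^ 2 ∂μ = K β β := by
    rw [← hrepK β β]; congr 1 with ζ; ring
  rw [e4] at hcs
  calc |K ξ β - K' ξ β| ≤ Real.sqrt (∫ ζ, D ζ ^ 2 ∂μ) * Real.sqrt (K β β) := hcs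
    _ ≤ Real.sqrt (K ξ ξ - K' ξ ξ) * Real.sqrt (K β β) := by
        exact mul_le_mul_of_nonneg_right (Real.sqrt_le_sqrt hD2) (Real.sqrt_nonneg _)
    _ = Real.sqrt (K β β) * Real.sqrt (K ξ ξ - K' ξ ξ) := mul_comm _ _
end

section
/- Fix ξ > 0 and a, b ∈ ℝ with a ≠ b, and define S_L(α,β) = ∫₀ᴸ cos(√α·x)·cos(√β·x) dx for α, β ≥ 0. Then lim_{L→∞} S_L(ξ + a/L, ξ + b/L) / S_L(ξ, ξ) = 2√ξ · sin( (a − b)/(2√ξ) ) / (a − b), where for each L the arguments ξ + a/L and ξ + b/L are eventually positive. -/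
open intervalIntegral Filter

lemma my_int_cos_mul (c L : ℝ) (hc : c ≠ 0) :
    ∫ x in (0:ℝ)..L, Real.cos (c * x) = Real.sin (c * L) / c := by
  rw [intervalIntegral.integral_comp_mul_left (fun x => Real.cos x) hc]
  simp [integral_cos, inv_mul_eq_div]

lemma my_int_cos_cos (p q L : ℝ) (h1 : p - q ≠ 0) (h2 : p + q ≠ 0) :
    ∫ x in (0:ℝ)..L, Real.cos (p*x) * Real.cos (q*x)
      = Real.sin ((p-q)*L) / (2*(p-q)) + Real.sin ((p+q)*L) / (2*(p+q)) := by
  have key : ∀ x : ℝ, Real.cos (p*x) * Real.cos (q*x)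
      = Real.cos ((p-q)*x) / 2 + Real.cos ((p+q)*x) / 2 := by
    intro x
    rw [sub_mul, add_mul, Real.cos_sub, Real.cos_add]; ring
  simp_rw [key]
  rw [intervalIntegral.integral_add ((by fun_prop : Continuous fun x : ℝ => Real.cos ((p-q)*x) / 2).intervalIntegrable 0 L) ((by fun_prop : Continuous fun x : ℝ => Real.cos ((p+q)*x) / 2).intervalIntegrable 0 L),
      intervalIntegral.integral_div, intervalIntegral.integral_div,
      my_int_cos_mul _ _ h1, my_int_cos_mul _ _ h2]
  field_simp

lemma my_int_cos_sq (s L : ℝ) (hs : s ≠ 0) :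
    ∫ x in (0:ℝ)..L, Real.cos (s*x) * Real.cos (s*x) = L/2 + Real.sin (2*s*L)/(4*s) := by
  have key : ∀ x : ℝ, Real.cos (s*x) * Real.cos (s*x) = 1/2 + Real.cos ((2*s)*x)/2 := by
    intro x
    have h := Real.cos_sq (s*x)
    have : Real.cos (s*x) * Real.cos (s*x) = Real.cos (s*x) ^ 2 := by ring
    rw [this, h, mul_assoc]
  simp_rw [key]
  rw [intervalIntegral.integral_add (intervalIntegrable_const) ((by fun_prop : Continuous fun x : ℝ => Real.cos ((2*s)*x) / 2).intervalIntegrable 0 L),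
      intervalIntegral.integral_div, intervalIntegral.integral_div, my_int_cos_mul _ _ (mul_ne_zero two_ne_zero hs),
      integral_one]
  field_simp
  ring

lemma my_sin_div_zero {u : ℝ → ℝ} (hu : Tendsto u atTop atTop) :
    Tendsto (fun L => Real.sin (u L) / (2 * u L)) atTop (nhds 0) := by
  apply squeeze_zero_norm (a := fun L => |(2 * u L)⁻¹|)
  · intro L
    rw [Real.norm_eq_abs, div_eq_mul_inv, abs_mul]
    calc |Real.sin (u L)| * |(2 * u L)⁻¹| ≤ 1 * |(2 * u L)⁻¹| := by
          apply mul_le_mul_of_nonneg_right _ (abs_nonneg _)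
          exact abs_le.mpr ⟨Real.neg_one_le_sin _, Real.sin_le_one _⟩
      _ = |(2 * u L)⁻¹| := one_mul _
  · have h2 : Tendsto (fun L => 2 * u L) atTop atTop :=
      hu.const_mul_atTop two_pos
    have h3 := h2.inv_tendsto_atTop
    simpa using h3.abs

/-- **Universality (sine-kernel) limit for the free Schrödinger operator.** With
`S_L(α,β) = ∫₀ᴸ cos(√α x)cos(√β x) dx`, for `ξ > 0` and `a ≠ b`,
`S_L(ξ + a/L, ξ + b/L)/S_L(ξ,ξ) → 2√ξ sin((a−b)/(2√ξ))/(a−b)` as `L → ∞`;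
moreover the arguments `ξ + a/L`, `ξ + b/L` are eventually positive. -/
theorem free_universality_limit
    (ξ a b : ℝ) (hξ : 0 < ξ) (hab : a ≠ b)
    (S : ℝ → ℝ → ℝ → ℝ)
    (hS : ∀ L α β : ℝ, S L α β =
      ∫ x in (0:ℝ)..L, Real.cos (Real.sqrt α * x) * Real.cos (Real.sqrt β * x)) :
    (∀ᶠ L in atTop, 0 < ξ + a / L ∧ 0 < ξ + b / L) ∧
    Tendsto (fun L : ℝ => S L (ξ + a / L) (ξ + b / L) / S L ξ ξ) atTop
      (nhds (2 * Real.sqrt ξ * Real.sin ((a - b) / (2 * Real.sqrt ξ)) / (a - b))) := by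
  have hxs : 0 < Real.sqrt ξ := Real.sqrt_pos.mpr hξ
  have hab' : a - b ≠ 0 := sub_ne_zero.mpr hab
  set c : ℝ := (a - b) / (2 * Real.sqrt ξ) with hc_def
  have hc : c ≠ 0 := div_ne_zero hab' (by positivity)
  set p : ℝ → ℝ := fun L => Real.sqrt (ξ + a / L) with hp_def
  set q : ℝ → ℝ := fun L => Real.sqrt (ξ + b / L) with hq_def
  have ha0 : Tendsto (fun L : ℝ => a / L) atTop (nhds 0) :=
    tendsto_const_nhds.div_atTop tendsto_id
  have hb0 : Tendsto (fun L : ℝ => b / L) atTop (nhds 0) :=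
    tendsto_const_nhds.div_atTop tendsto_id
  have hev : ∀ᶠ L : ℝ in atTop, 0 < L ∧ 0 < ξ + a / L ∧ 0 < ξ + b / L := by
    have h1 : ∀ᶠ L : ℝ in atTop, -(ξ/2) < a / L :=
      ha0.eventually (eventually_gt_nhds (by linarith))
    have h2 : ∀ᶠ L : ℝ in atTop, -(ξ/2) < b / L :=
      hb0.eventually (eventually_gt_nhds (by linarith))
    filter_upwards [h1, h2, eventually_gt_atTop (0:ℝ)] with L hL1 hL2 hL0
    exact ⟨hL0, by linarith, by linarith⟩
  refine ⟨hev.mono fun L h => ⟨h.2.1, h.2.2⟩, ?_⟩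
  -- limits of p, q
  have hp : Tendsto p atTop (nhds (Real.sqrt ξ)) := by
    have h : Tendsto (fun L : ℝ => ξ + a / L) atTop (nhds ξ) := by
      simpa using tendsto_const_nhds.add ha0
    exact (Real.continuous_sqrt.tendsto ξ).comp h
  have hq : Tendsto q atTop (nhds (Real.sqrt ξ)) := by
    have h : Tendsto (fun L : ℝ => ξ + b / L) atTop (nhds ξ) := by
      simpa using tendsto_const_nhds.add hb0
    exact (Real.continuous_sqrt.tendsto ξ).comp h
  have hpq : Tendsto (fun L => p L + q L) atTop (nhds (2 * Real.sqrt ξ)) := by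
    have := hp.add hq
    simpa [two_mul] using this
  -- g L = (p L - q L) * L  tends to c
  set g : ℝ → ℝ := fun L => (p L - q L) * L with hg_def
  have hkey : ∀ᶠ L : ℝ in atTop, g L = (a - b) / (p L + q L) ∧
      p L - q L ≠ 0 ∧ 0 < p L + q L := by
    filter_upwards [hev] with L ⟨hL0, hα, hβ⟩
    have hP2 : p L ^ 2 = ξ + a / L := Real.sq_sqrt hα.le
    have hQ2 : q L ^ 2 = ξ + b / L := Real.sq_sqrt hβ.le
    have hPp : 0 < p L := Real.sqrt_pos.mpr hα
    have hQp : 0 < q L := Real.sqrt_pos.mpr hβ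
    have hsum : 0 < p L + q L := by linarith
    have hne : p L - q L ≠ 0 := by
      intro h
      have hpq' : p L = q L := by linarith
      have : ξ + a / L = ξ + b / L := by rw [← hP2, ← hQ2, hpq']
      have : a / L = b / L := by linarith
      exact hab (by field_simp at this; linarith)
    have hPQ : (p L - q L) * (p L + q L) = (a - b) / L := by
      have : (p L - q L) * (p L + q L) = p L ^ 2 - q L ^ 2 := by ring
      rw [this, hP2, hQ2]
      field_simp
      ring
    refine ⟨?_, hne, hsum⟩
    rw [hg_def]
    field_simp at hPQ ⊢
    linear_combination hPQ
  have hg : Tendsto g atTop (nhds c) := by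
    have h1 : Tendsto (fun L => (a - b) / (p L + q L)) atTop (nhds c) :=
      tendsto_const_nhds.div hpq (by positivity)
    exact Tendsto.congr' (hkey.mono fun L h => h.1.symm) h1
  -- numerator and denominator
  set N : ℝ → ℝ := fun L => Real.sin (g L) / (2 * g L)
      + Real.sin ((p L + q L) * L) / (2 * ((p L + q L) * L)) with hN_def
  set D : ℝ → ℝ := fun L => 1/2 + Real.sin (2 * Real.sqrt ξ * L) / (2 * (2 * Real.sqrt ξ * L))
      with hD_def
  have hN : Tendsto N atTop (nhds (Real.sin c / (2 * c))) := by
    have h1 : Tendsto (fun L => Real.sin (g L) / (2 * g L)) atTop (nhds (Real.sin c / (2 * c))) := by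
      have hcont : ContinuousAt (fun x => Real.sin x / (2 * x)) c :=
        Real.continuous_sin.continuousAt.div (by fun_prop) (by simpa using hc)
      exact hcont.tendsto.comp hg
    have h2 : Tendsto (fun L => Real.sin ((p L + q L) * L) / (2 * ((p L + q L) * L)))
        atTop (nhds 0) := by
      exact my_sin_div_zero (hpq.pos_mul_atTop (by positivity) tendsto_id)
    simpa using h1.add h2
  have hD : Tendsto D atTop (nhds (1/2)) := by
    have h2 : Tendsto (fun L : ℝ => Real.sin (2 * Real.sqrt ξ * L) / (2 * (2 * Real.sqrt ξ * L)))
        atTop (nhds 0) :=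
      my_sin_div_zero (tendsto_id.const_mul_atTop (by positivity))
    have h1 : Tendsto (fun L : ℝ => 1/2 + Real.sin (2 * Real.sqrt ξ * L) / (2 * (2 * Real.sqrt ξ * L)))
        atTop (nhds (1/2 + 0)) := tendsto_const_nhds.add h2
    rw [add_zero] at h1
    exact h1
  have hratio : Tendsto (fun L => N L / D L) atTop
      (nhds (2 * Real.sqrt ξ * Real.sin ((a - b) / (2 * Real.sqrt ξ)) / (a - b))) := by
    have := hN.div hD (by norm_num)
    have heq : Real.sin c / (2 * c) / (1 / 2)
        = 2 * Real.sqrt ξ * Real.sin ((a - b) / (2 * Real.sqrt ξ)) / (a - b) := by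
      rw [hc_def]
      field_simp
    rw [← heq]
    exact this
  -- eventual equality of the ratio
  apply hratio.congr'
  filter_upwards [hev, hkey] with L ⟨hL0, hα, hβ⟩ ⟨hgeq, hne, hsum⟩
  have hL0' : L ≠ 0 := ne_of_gt hL0
  rw [hS, hS]
  rw [my_int_cos_cos _ _ _ hne (ne_of_gt hsum), my_int_cos_sq _ _ (ne_of_gt hxs)]
  have hSnum : Real.sin ((p L - q L) * L) / (2 * (p L - q L))
      + Real.sin ((p L + q L) * L) / (2 * (p L + q L)) = L * N L := by
    rw [hN_def, hg_def]
    field_simp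
  have hSden : L / 2 + Real.sin (2 * Real.sqrt ξ * L) / (4 * Real.sqrt ξ) = L * D L := by
    rw [hD_def]
    field_simp
    ring
  rw [hSnum, hSden, mul_div_mul_left _ _ hL0']
end

section
/- Let V : [0,∞) → ℝ be continuous with ∫₀ˣ |V(t)| dt ≤ M·x for all x ≥ 0, where M ≥ 0. Let ε > 0 and let ξ > 0 satisfy ξ ≥ 4M²/ε². Let u : [0,∞) → ℝ be twice continuously differentiable with −u'' + V·u = ξ·u, u(0) = 1, u'(0) = 0. Then for every L > 0, ∫₀ᴸ u(x)² dx ≤ e^{εL}/ε. -/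
open MeasureTheory intervalIntegral Set

/-- **Regularity bound at large energy.** If `∫₀ˣ |V| ≤ M x` and `ξ ≥ 4M²/ε²`,
`ξ > 0`, then the Neumann solution `u` of `-u'' + V u = ξ u`, `u(0) = 1`, `u'(0) = 0`,
satisfies `∫₀ᴸ u² ≤ e^{εL}/ε` for every `L > 0`. -/
theorem regularity_bound_large_energy
    (V : ℝ → ℝ) (hV : ContinuousOn V (Ici 0))
    (M : ℝ) (hM : 0 ≤ M)
    (hVM : ∀ x ≥ (0:ℝ), (∫ t in (0:ℝ)..x, |V t|) ≤ M * x)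
    (ε : ℝ) (hε : 0 < ε)
    (ξ : ℝ) (hξ : 0 < ξ) (hξM : 4 * M ^ 2 / ε ^ 2 ≤ ξ)
    (u u' u'' : ℝ → ℝ)
    (hu1 : ∀ x ∈ Ici (0:ℝ), HasDerivAt u (u' x) x)
    (hu2 : ∀ x ∈ Ici (0:ℝ), HasDerivAt u' (u'' x) x)
    (hu3 : ContinuousOn u'' (Ici 0))
    (hODE : ∀ x ∈ Ici (0:ℝ), -u'' x + V x * u x = ξ * u x)
    (hbc1 : u 0 = 1) (hbc2 : u' 0 = 0) :
    ∀ L > (0:ℝ), ∫ x in (0:ℝ)..L, (u x) ^ 2 ≤ Real.exp (ε * L) / ε := by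
  set s : ℝ := Real.sqrt ξ with hs_def
  have hs : 0 < s := Real.sqrt_pos.2 hξ
  have hs2 : s ^ 2 = ξ := Real.sq_sqrt hξ.le
  have hMs : 2 * M ≤ ε * s := by
    have h1 : 4 * M ^ 2 ≤ ε ^ 2 * ξ := by
      rw [div_le_iff₀ (by positivity)] at hξM
      linarith [hξM]
    nlinarith [mul_pos hε hs]
  have habs : ContinuousOn (fun t => |V t|) (Ici 0) := hV.abs
  have hWint : ∀ x ∈ Ici (0:ℝ), IntervalIntegrable (fun t => |V t|) volume 0 x := by
    intro x hx
    exact (habs.mono (by rw [uIcc_of_le hx]; exact Icc_subset_Ici_self)).intervalIntegrable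
  set W : ℝ → ℝ := fun x => ∫ t in (0:ℝ)..x, |V t| with hW_def
  -- derivative of W within Ici 0
  have hWd : ∀ x ∈ Ici (0:ℝ), HasDerivWithinAt W (|V x|) (Ici 0) x := by
    intro x hx
    rcases eq_or_lt_of_le (α := ℝ) hx with h0 | h0
    · subst h0
      exact integral_hasDerivWithinAt_right (hWint 0 self_mem_Ici)
        ⟨Ici 0, Filter.mem_of_superset self_mem_nhdsWithin Ioi_subset_Ici_self,
          habs.aestronglyMeasurable measurableSet_Ici⟩
        ((habs.continuousWithinAt self_mem_Ici).mono Ioi_subset_Ici_self)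
    · have hnhds : Ici (0:ℝ) ∈ nhds x := Ici_mem_nhds h0
      have hca : ContinuousAt (fun t => |V t|) x := habs.continuousAt hnhds
      exact (integral_hasDerivAt_right (hWint x hx)
        ⟨Ici 0, hnhds, habs.aestronglyMeasurable measurableSet_Ici⟩ hca).hasDerivWithinAt
  -- energy and weighted energy
  set E : ℝ → ℝ := fun x => u x ^ 2 + u' x ^ 2 / ξ with hE_def
  set G : ℝ → ℝ := fun x => E x * Real.exp (-(s⁻¹ * W x)) with hG_def
  have hGd : ∀ x ∈ Ici (0:ℝ), HasDerivWithinAt G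
      ((2 * u x * u' x + 2 * u' x * u'' x / ξ) * Real.exp (-(s⁻¹ * W x))
        + E x * (Real.exp (-(s⁻¹ * W x)) * (-(s⁻¹ * |V x|)))) (Ici 0) x := by
    intro x hx
    have hEx : HasDerivWithinAt E (2 * u x * u' x + 2 * u' x * u'' x / ξ) (Ici 0) x := by
      have h1 := ((hu1 x hx).pow 2).hasDerivWithinAt (s := Ici 0)
      have h2 := (((hu2 x hx).pow 2).div_const ξ).hasDerivWithinAt (s := Ici 0)
      have := h1.add h2
      refine this.congr_deriv ?_
      norm_num
    have hexp : HasDerivWithinAt (fun y => Real.exp (-(s⁻¹ * W y)))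
        (Real.exp (-(s⁻¹ * W x)) * (-(s⁻¹ * |V x|))) (Ici 0) x := by
      exact (((hWd x hx).const_mul s⁻¹).neg).exp
    exact hEx.mul hexp
  have hGd_nonpos : ∀ x ∈ Ici (0:ℝ),
      (2 * u x * u' x + 2 * u' x * u'' x / ξ) * Real.exp (-(s⁻¹ * W x))
        + E x * (Real.exp (-(s⁻¹ * W x)) * (-(s⁻¹ * |V x|))) ≤ 0 := by
    intro x hx
    have hu''x : u'' x = V x * u x - ξ * u x := by linarith [hODE x hx]
    have hexp_pos : 0 < Real.exp (-(s⁻¹ * W x)) := Real.exp_pos _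
    have key : 2 * u x * u' x + 2 * u' x * u'' x / ξ
        + E x * (-(s⁻¹ * |V x|)) ≤ 0 := by
      simp only [hu''x, hE_def]
      have expand : 2 * u x * u' x + 2 * u' x * (V x * u x - ξ * u x) / ξ
          + (u x ^ 2 + u' x ^ 2 / ξ) * (-(s⁻¹ * |V x|))
          = (2 * s * u' x * V x * u x - |V x| * (s ^ 2 * u x ^ 2 + u' x ^ 2)) / s ^ 3 := by
        rw [← hs2]
        field_simp
        ring
      rw [expand]
      apply div_nonpos_of_nonpos_of_nonneg _ (by positivity)
      rcases abs_cases (V x) with ⟨ha, _⟩ | ⟨ha, _⟩ <;> rw [ha]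
      · nlinarith [mul_nonneg (abs_nonneg (V x)) (sq_nonneg (s * u x - u' x)),
          sq_nonneg (s * u x - u' x), ha ▸ mul_nonneg (abs_nonneg (V x)) (sq_nonneg (s * u x - u' x))]
      · nlinarith [ha ▸ mul_nonneg (abs_nonneg (V x)) (sq_nonneg (s * u x + u' x))]
    calc (2 * u x * u' x + 2 * u' x * u'' x / ξ) * Real.exp (-(s⁻¹ * W x))
        + E x * (Real.exp (-(s⁻¹ * W x)) * (-(s⁻¹ * |V x|)))
        = (2 * u x * u' x + 2 * u' x * u'' x / ξ + E x * (-(s⁻¹ * |V x|)))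
            * Real.exp (-(s⁻¹ * W x)) := by ring
      _ ≤ 0 := mul_nonpos_of_nonpos_of_nonneg key hexp_pos.le
  -- G is antitone on Ici 0
  have hGanti : AntitoneOn G (Ici 0) := by
    apply antitoneOn_of_deriv_nonpos (convex_Ici 0)
    · intro x hx
      exact (hGd x hx).continuousWithinAt
    · intro x hx
      rw [interior_Ici] at hx
      exact ((hGd x (mem_Ici.2 (le_of_lt hx))).hasDerivAt (Ici_mem_nhds hx)).differentiableAt.differentiableWithinAt
    · intro x hx
      rw [interior_Ici] at hx
      rw [((hGd x (mem_Ici.2 (le_of_lt hx))).hasDerivAt (Ici_mem_nhds hx)).deriv]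
      exact hGd_nonpos x (mem_Ici.2 (le_of_lt hx))
  have hG0 : G 0 = 1 := by
    simp [hG_def, hE_def, hW_def, hbc1, hbc2, integral_same]
  -- pointwise bound u x ^ 2 ≤ exp (ε x)
  have hpt : ∀ x ∈ Ici (0:ℝ), u x ^ 2 ≤ Real.exp (ε * x) := by
    intro x hx
    have hGx : G x ≤ 1 := hG0 ▸ hGanti self_mem_Ici hx hx
    have hEx : E x ≤ Real.exp (s⁻¹ * W x) := by
      have h := mul_le_mul_of_nonneg_right hGx (Real.exp_pos (s⁻¹ * W x)).le
      simp only [hG_def] at h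
      rw [mul_assoc, ← Real.exp_add, one_mul, neg_add_cancel, Real.exp_zero, mul_one] at h
      exact h
    have hWx : W x ≤ M * x := hVM x hx
    have h1 : s⁻¹ * W x ≤ ε * x := by
      have h2 : s⁻¹ * W x ≤ s⁻¹ * (M * x) := by
        apply mul_le_mul_of_nonneg_left hWx (inv_nonneg.2 hs.le)
      refine h2.trans ?_
      rw [inv_mul_le_iff₀ hs]
      have : M * x ≤ (ε * s) * x := by
        apply mul_le_mul_of_nonneg_right _ hx
        nlinarith
      linarith [this]
    have h3 : u x ^ 2 ≤ E x := by
      have : 0 ≤ u' x ^ 2 / ξ := by positivity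
      simp only [hE_def]; linarith
    exact h3.trans (hEx.trans (Real.exp_le_exp.2 h1))
  -- integrate
  intro L hL
  have hLmem : L ∈ Ici (0:ℝ) := hL.le
  have hu_cont : ContinuousOn u (Ici 0) := fun x hx => (hu1 x hx).continuousAt.continuousWithinAt
  have hint1 : IntervalIntegrable (fun x => u x ^ 2) volume 0 L := by
    exact ((hu_cont.mono (by rw [uIcc_of_le hL.le]; exact Icc_subset_Ici_self)).pow 2).intervalIntegrable
  have hint2 : IntervalIntegrable (fun x => Real.exp (ε * x)) volume 0 L :=
    (Real.continuous_exp.comp (continuous_const.mul continuous_id)).intervalIntegrable 0 L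
  have hmono : ∫ x in (0:ℝ)..L, u x ^ 2 ≤ ∫ x in (0:ℝ)..L, Real.exp (ε * x) := by
    apply integral_mono_on hL.le hint1 hint2
    intro x hx
    exact hpt x hx.1
  have hcomp : ∫ x in (0:ℝ)..L, Real.exp (ε * x) = Real.exp (ε * L) / ε - Real.exp (ε * 0) / ε := by
    apply integral_eq_sub_of_hasDerivAt
    · intro x _
      have h := ((((hasDerivAt_id x).const_mul ε).exp)).div_const ε
      simp only [id_eq, mul_one] at h
      refine h.congr_deriv ?_
      rw [mul_div_cancel_right₀ _ hε.ne']
    · exact hint2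
  have : ∫ x in (0:ℝ)..L, Real.exp (ε * x) ≤ Real.exp (ε * L) / ε := by
    rw [hcomp]
    have : 0 < Real.exp (ε * 0) / ε := by positivity
    linarith
  calc ∫ x in (0:ℝ)..L, u x ^ 2 ≤ _ := hmono
    _ ≤ _ := this
end
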